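/- Let f : [0,∞) × [0,1] → ℝ be continuous with continuous partial derivative ∂f/∂t. Define u(t,x) = ∫₀ᵗ (e^{t−τ} − 1) f(τ,x) dτ − 3x ∫₀ᵗ ∫₀¹ e^{t−τ} s f(τ,s) ds dτ. Then u has continuous partial derivatives ∂u/∂t and ∂²u/∂t², and satisfies, for all t ≥ 0 and x ∈ [0,1], the second-order degenerate integro-differential equation ∂²u/∂t²(t,x) − 3 ∫₀¹ x s ∂²u/∂t²(t,s) ds = ∂u/∂t(t,x) + f(t,x), together with the initial conditions u(0,x) = 0 and ∂u/∂t(0,x) − 3x ∫₀¹ s ∂u/∂t(0,s) ds = 0 for all x ∈ [0,1]. -/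

import Mathlib

/-- The explicit solution of Example 3:
`u(t,x) = ∫₀ᵗ (e^{t−τ} − 1) f(τ,x) dτ − 3x ∫₀ᵗ ∫₀¹ e^{t−τ} s f(τ,s) ds dτ`. -/
noncomputable def uSol2 (f : ℝ → ℝ → ℝ) (t x : ℝ) : ℝ :=
  (∫ τ in (0:ℝ)..t, (Real.exp (t - τ) - 1) * f τ x)
    - 3 * x * ∫ τ in (0:ℝ)..t, ∫ s in (0:ℝ)..1, Real.exp (t - τ) * (s * f τ s)

open MeasureTheory Set intervalIntegral Real

lemma fubini_helper {h : ℝ → ℝ → ℝ} (hh : Continuous fun p : ℝ × ℝ => h p.1 p.2)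
    {t : ℝ} (ht : 0 ≤ t) :
    ∫ τ in (0:ℝ)..t, ∫ s in (0:ℝ)..1, h τ s = ∫ s in (0:ℝ)..1, ∫ τ in (0:ℝ)..t, h τ s := by
  have hint : Integrable (Function.uncurry h)
      ((volume.restrict (Ioc (0:ℝ) t)).prod (volume.restrict (Ioc (0:ℝ) 1))) := by
    rw [Measure.prod_restrict, ← Measure.volume_eq_prod]
    apply (hh.continuousOn.integrableOn_compact
      (isCompact_Icc (a := ((0:ℝ),(0:ℝ))) (b := (t,1)))).mono_set
    rintro ⟨a, b⟩ ⟨ha, hb⟩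
    exact ⟨⟨ha.1.le, hb.1.le⟩, ⟨ha.2, hb.2⟩⟩
  rw [intervalIntegral.integral_of_le ht, intervalIntegral.integral_of_le (zero_le_one)]
  simp_rw [intervalIntegral.integral_of_le ht, intervalIntegral.integral_of_le (zero_le_one)]
  exact integral_integral_swap hint

lemma prim_deriv {g : ℝ → ℝ} (hg : Continuous g) (t : ℝ) :
    HasDerivAt (fun u => ∫ τ in (0:ℝ)..u, g τ) (g t) t :=
  integral_hasDerivAt_right (hg.intervalIntegrable _ _)
    (hg.stronglyMeasurable.stronglyMeasurableAtFilter) hg.continuousAt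


/-- If `f` is continuous on `[0,∞) × [0,1]` with continuous partial derivative `∂f/∂t`,
then `u = uSol2 f` has continuous partial derivatives `∂u/∂t` and `∂²u/∂t²` and satisfies
the degenerate equation
`∂²u/∂t²(t,x) − 3 ∫₀¹ x s ∂²u/∂t²(t,s) ds = ∂u/∂t(t,x) + f(t,x)` on `[0,∞) × [0,1]`,
with `u(0,x) = 0` and `∂u/∂t(0,x) − 3x ∫₀¹ s ∂u/∂t(0,s) ds = 0` for `x ∈ [0,1]`. -/
theorem stmt_8 (f ft : ℝ → ℝ → ℝ)
    (hf : ContinuousOn (fun p : ℝ × ℝ => f p.1 p.2) (Set.Ici 0 ×ˢ Set.Icc 0 1))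
    (hft : ∀ x ∈ Set.Icc (0:ℝ) 1, ∀ t ∈ Set.Ici (0:ℝ),
      HasDerivWithinAt (fun τ => f τ x) (ft t x) (Set.Ici 0) t)
    (hftc : ContinuousOn (fun p : ℝ × ℝ => ft p.1 p.2) (Set.Ici 0 ×ˢ Set.Icc 0 1)) :
    ∃ ut utt : ℝ → ℝ → ℝ,
      ContinuousOn (fun p : ℝ × ℝ => ut p.1 p.2) (Set.Ici 0 ×ˢ Set.Icc 0 1) ∧
      ContinuousOn (fun p : ℝ × ℝ => utt p.1 p.2) (Set.Ici 0 ×ˢ Set.Icc 0 1) ∧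
      (∀ x ∈ Set.Icc (0:ℝ) 1, ∀ t ∈ Set.Ici (0:ℝ),
        HasDerivWithinAt (fun τ => uSol2 f τ x) (ut t x) (Set.Ici 0) t) ∧
      (∀ x ∈ Set.Icc (0:ℝ) 1, ∀ t ∈ Set.Ici (0:ℝ),
        HasDerivWithinAt (fun τ => ut τ x) (utt t x) (Set.Ici 0) t) ∧
      (∀ t ∈ Set.Ici (0:ℝ), ∀ x ∈ Set.Icc (0:ℝ) 1,
        utt t x - 3 * x * ∫ s in (0:ℝ)..1, s * utt t s = ut t x + f t x) ∧
      (∀ x ∈ Set.Icc (0:ℝ) 1, uSol2 f 0 x = 0) ∧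
      (∀ x ∈ Set.Icc (0:ℝ) 1,
        ut 0 x - 3 * x * ∫ s in (0:ℝ)..1, s * ut 0 s = 0) := by
  classical
  -- clamping map
  set q : ℝ → ℝ := fun x => min (max x 0) 1 with hq
  have hqmem : ∀ x, q x ∈ Icc (0:ℝ) 1 := fun x =>
    ⟨le_min (le_max_right x 0) zero_le_one, min_le_right _ _⟩
  have hqc : Continuous q := (continuous_id.max continuous_const).min continuous_const
  have hqeq : ∀ x ∈ Icc (0:ℝ) 1, q x = x := fun x hx => by
    simp [hq, max_eq_left hx.1, min_eq_left hx.2]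
  -- clamped extensions
  set F : ℝ → ℝ → ℝ := fun t x => f (max t 0) (q x) with hF
  set Ft : ℝ → ℝ → ℝ := fun t x => ft (max t 0) (q x) with hFt
  have hFc : Continuous fun p : ℝ × ℝ => F p.1 p.2 := by
    have : Continuous ((fun p : ℝ × ℝ => f p.1 p.2) ∘
        fun p : ℝ × ℝ => (max p.1 0, q p.2)) :=
      hf.comp_continuous (by fun_prop) (fun p => ⟨Set.mem_Ici.mpr (le_max_right _ _), hqmem _⟩)
    exact this
  have hFtc : Continuous fun p : ℝ × ℝ => Ft p.1 p.2 := by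
    have : Continuous ((fun p : ℝ × ℝ => ft p.1 p.2) ∘
        fun p : ℝ × ℝ => (max p.1 0, q p.2)) :=
      hftc.comp_continuous (by fun_prop) (fun p => ⟨Set.mem_Ici.mpr (le_max_right _ _), hqmem _⟩)
    exact this
  have hFeq : ∀ t ∈ Ici (0:ℝ), ∀ x ∈ Icc (0:ℝ) 1, F t x = f t x := fun t ht x hx => by
    simp [hF, max_eq_left (Set.mem_Ici.mp ht), hqeq x hx]
  have hFteq : ∀ t ∈ Ici (0:ℝ), ∀ x ∈ Icc (0:ℝ) 1, Ft t x = ft t x := fun t ht x hx => by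
    simp [hFt, max_eq_left (Set.mem_Ici.mp ht), hqeq x hx]
  have hFx : ∀ x, Continuous fun t => F t x := fun x => by
    have : Continuous ((fun p : ℝ × ℝ => F p.1 p.2) ∘ fun t : ℝ => (t, x)) :=
      hFc.comp (by fun_prop)
    exact this
  have hFtx : ∀ x, Continuous fun t => Ft t x := fun x => by
    have : Continuous ((fun p : ℝ × ℝ => Ft p.1 p.2) ∘ fun t : ℝ => (t, x)) :=
      hFtc.comp (by fun_prop)
    exact this
  -- derivative of F in t within Ici 0
  have hFderiv : ∀ x ∈ Icc (0:ℝ) 1, ∀ t ∈ Ici (0:ℝ),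
      HasDerivWithinAt (fun τ => F τ x) (Ft t x) (Ici 0) t := by
    intro x hx t ht
    rw [hFteq t ht x hx]
    exact (hft x hx t ht).congr (fun y hy => hFeq y hy x hx) (hFeq t ht x hx)
  -- the basic integrals
  set A : ℝ → ℝ → ℝ := fun t x => ∫ τ in (0:ℝ)..t, Real.exp (-τ) * F τ x with hA
  set D : ℝ → ℝ := fun t => ∫ s in (0:ℝ)..1, s * F t s with hD
  set E : ℝ → ℝ := fun t => ∫ s in (0:ℝ)..1, s * Ft t s with hE
  set C : ℝ → ℝ := fun t => ∫ τ in (0:ℝ)..t, Real.exp (-τ) * D τ with hC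
  -- continuity
  have hAc : Continuous fun p : ℝ × ℝ => A p.1 p.2 := by
    have := intervalIntegral.continuous_parametric_intervalIntegral_of_continuous
      (μ := volume) (a₀ := (0:ℝ))
      (f := fun (p : ℝ × ℝ) (τ : ℝ) => Real.exp (-τ) * F τ p.2)
      (by fun_prop) (s := fun p : ℝ × ℝ => p.1) continuous_fst
    exact this
  have hDc : Continuous D := by
    exact intervalIntegral.continuous_parametric_intervalIntegral_of_continuous'
      (μ := volume) (f := fun (t s : ℝ) => s * F t s) (by fun_prop) 0 1
  have hEc : Continuous E := by
    exact intervalIntegral.continuous_parametric_intervalIntegral_of_continuous'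
      (μ := volume) (f := fun (t s : ℝ) => s * Ft t s) (by fun_prop) 0 1
  have hCc : Continuous C :=
    intervalIntegral.continuous_primitive
      (fun a b => ((by fun_prop : Continuous fun τ => Real.exp (-τ) * D τ)).intervalIntegrable a b) 0
  -- candidate derivatives
  set ut : ℝ → ℝ → ℝ := fun t x =>
    Real.exp t * A t x - 3 * x * (Real.exp t * C t + D t) with hut_def
  set utt : ℝ → ℝ → ℝ := fun t x =>
    Real.exp t * A t x + F t x - 3 * x * (Real.exp t * C t + D t + E t) with hutt_def
  have hexp1 : ∀ t : ℝ, Real.exp t * Real.exp (-t) = 1 := fun t => by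
    rw [← Real.exp_add]; simp
  -- D has one-sided derivative E
  have hDid : ∀ t ∈ Ici (0:ℝ), D t = D 0 + ∫ τ in (0:ℝ)..t, E τ := by
    intro t ht
    have hswap := fubini_helper (h := fun τ s => s * Ft τ s) (by fun_prop) ht
    have hinner : ∀ s ∈ Icc (0:ℝ) 1,
        (∫ τ in (0:ℝ)..t, Ft τ s) = F t s - F 0 s := by
      intro s hs
      apply intervalIntegral.integral_eq_sub_of_hasDeriv_right_of_le ht
        ((hFx s).continuousOn)
      · intro τ hτ
        exact (((hFderiv s hs τ hτ.1.le).hasDerivAt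
          (Ici_mem_nhds hτ.1)).hasDerivWithinAt)
      · exact (hFtx s).intervalIntegrable _ _
    have : (∫ s in (0:ℝ)..1, ∫ τ in (0:ℝ)..t, s * Ft τ s) = D t - D 0 := by
      have h1 : ∀ s ∈ uIcc (0:ℝ) 1,
          (∫ τ in (0:ℝ)..t, s * Ft τ s) = s * F t s - s * F 0 s := by
        intro s hs
        rw [intervalIntegral.integral_const_mul,
          hinner s (by rwa [uIcc_of_le zero_le_one] at hs)]
        ring
      rw [intervalIntegral.integral_congr h1, intervalIntegral.integral_sub
        (((by fun_prop : Continuous fun s => s * F t s)).intervalIntegrable _ _)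
        (((by fun_prop : Continuous fun s => s * F 0 s)).intervalIntegrable _ _)]
    rw [hE]
    simp only []
    rw [hswap, this]
    ring
  have hDderiv : ∀ t ∈ Ici (0:ℝ), HasDerivWithinAt D (E t) (Ici 0) t := by
    intro t ht
    have hG : HasDerivAt (fun u => D 0 + ∫ τ in (0:ℝ)..u, E τ) (E t) t :=
      (prim_deriv hEc t).const_add _
    exact (hG.hasDerivWithinAt).congr (fun y hy => hDid y hy) (hDid t ht)
  -- rewriting uSol2 on the domain
  have hu_eq : ∀ x ∈ Icc (0:ℝ) 1, ∀ t ∈ Ici (0:ℝ),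
      uSol2 f t x = Real.exp t * A t x - (∫ τ in (0:ℝ)..t, F τ x)
        - 3 * x * (Real.exp t * C t) := by
    intro x hx t ht
    have h1 : (∫ τ in (0:ℝ)..t, (Real.exp (t - τ) - 1) * f τ x)
        = Real.exp t * A t x - (∫ τ in (0:ℝ)..t, F τ x) := by
      have : ∀ τ ∈ uIcc (0:ℝ) t, (Real.exp (t - τ) - 1) * f τ x
          = Real.exp t * (Real.exp (-τ) * F τ x) - F τ x := by
        intro τ hτ
        rw [uIcc_of_le ht] at hτ
        rw [hFeq τ hτ.1 x hx, sub_eq_add_neg t τ, Real.exp_add]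
        ring
      rw [intervalIntegral.integral_congr this, intervalIntegral.integral_sub
        (((by fun_prop : Continuous fun τ =>
          Real.exp t * (Real.exp (-τ) * F τ x))).intervalIntegrable _ _)
        (((hFx x)).intervalIntegrable _ _), intervalIntegral.integral_const_mul]
    have h2 : (∫ τ in (0:ℝ)..t, ∫ s in (0:ℝ)..1, Real.exp (t - τ) * (s * f τ s))
        = Real.exp t * C t := by
      have hinner : ∀ τ ∈ uIcc (0:ℝ) t,
          (∫ s in (0:ℝ)..1, Real.exp (t - τ) * (s * f τ s))
            = Real.exp t * (Real.exp (-τ) * D τ) := by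
        intro τ hτ
        rw [uIcc_of_le ht] at hτ
        have : ∀ s ∈ uIcc (0:ℝ) 1, Real.exp (t - τ) * (s * f τ s)
            = Real.exp (t - τ) * (s * F τ s) := by
          intro s hs
          rw [uIcc_of_le zero_le_one] at hs
          rw [hFeq τ hτ.1 s hs]
        rw [intervalIntegral.integral_congr this, intervalIntegral.integral_const_mul,
          sub_eq_add_neg t τ, Real.exp_add]
        ring
      rw [intervalIntegral.integral_congr hinner, intervalIntegral.integral_const_mul]
    rw [uSol2, h1, h2]
  -- derivative of u
  have hut : ∀ x ∈ Icc (0:ℝ) 1, ∀ t ∈ Ici (0:ℝ),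
      HasDerivWithinAt (fun τ => uSol2 f τ x) (ut t x) (Ici 0) t := by
    intro x hx t ht
    have hU : HasDerivAt (fun u => Real.exp u * A u x - (∫ τ in (0:ℝ)..u, F τ x)
        - 3 * x * (Real.exp u * C u))
        ((Real.exp t * A t x + Real.exp t * (Real.exp (-t) * F t x)) - F t x
          - 3 * x * (Real.exp t * C t + Real.exp t * (Real.exp (-t) * D t))) t := by
      have hA' : HasDerivAt (fun u => A u x) (Real.exp (-t) * F t x) t :=
        prim_deriv (by fun_prop) t
      have hC' : HasDerivAt C (Real.exp (-t) * D t) t := prim_deriv (by fun_prop) t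
      have hB' : HasDerivAt (fun u => ∫ τ in (0:ℝ)..u, F τ x) (F t x) t :=
        prim_deriv (hFx x) t
      exact (((Real.hasDerivAt_exp t).mul hA').sub hB').sub
        (((Real.hasDerivAt_exp t).mul hC').const_mul (3 * x))
    have hval : (Real.exp t * A t x + Real.exp t * (Real.exp (-t) * F t x)) - F t x
        - 3 * x * (Real.exp t * C t + Real.exp t * (Real.exp (-t) * D t)) = ut t x := by
      have h2 : Real.exp t * (Real.exp (-t) * F t x) = F t x := by
        rw [← mul_assoc, hexp1 t, one_mul]
      have h3 : Real.exp t * (Real.exp (-t) * D t) = D t := by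
        rw [← mul_assoc, hexp1 t, one_mul]
      rw [hut_def]
      simp only []
      rw [h2, h3]
      ring
    rw [← hval]
    exact (hU.hasDerivWithinAt).congr (fun y hy => hu_eq x hx y hy) (hu_eq x hx t ht)
  -- derivative of ut
  have hutt : ∀ x ∈ Icc (0:ℝ) 1, ∀ t ∈ Ici (0:ℝ),
      HasDerivWithinAt (fun τ => ut τ x) (utt t x) (Ici 0) t := by
    intro x hx t ht
    have hA' : HasDerivAt (fun u => A u x) (Real.exp (-t) * F t x) t :=
      prim_deriv (by fun_prop) t
    have hC' : HasDerivAt C (Real.exp (-t) * D t) t := prim_deriv (by fun_prop) t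
    have hU : HasDerivWithinAt (fun u => Real.exp u * A u x
        - 3 * x * (Real.exp u * C u + D u))
        (((Real.exp t * A t x + Real.exp t * (Real.exp (-t) * F t x)))
          - 3 * x * ((Real.exp t * C t + Real.exp t * (Real.exp (-t) * D t)) + E t))
        (Ici 0) t := by
      exact (((Real.hasDerivAt_exp t).mul hA').hasDerivWithinAt).sub
        (((((Real.hasDerivAt_exp t).mul hC').hasDerivWithinAt).add
          (hDderiv t ht)).const_mul (3 * x))
    have hval : (((Real.exp t * A t x + Real.exp t * (Real.exp (-t) * F t x)))
        - 3 * x * ((Real.exp t * C t + Real.exp t * (Real.exp (-t) * D t)) + E t))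
        = utt t x := by
      have h2 : Real.exp t * (Real.exp (-t) * F t x) = F t x := by
        rw [← mul_assoc, hexp1 t, one_mul]
      have h3 : Real.exp t * (Real.exp (-t) * D t) = D t := by
        rw [← mul_assoc, hexp1 t, one_mul]
      rw [hutt_def]
      simp only []
      rw [h2, h3]
    rw [← hval]
    exact hU
  -- key integral identity : ∫ s * A t s = C t
  have hAC : ∀ t ∈ Ici (0:ℝ), (∫ s in (0:ℝ)..1, s * A t s) = C t := by
    intro t ht
    have h1 : ∀ s ∈ uIcc (0:ℝ) 1,
        s * A t s = ∫ τ in (0:ℝ)..t, s * (Real.exp (-τ) * F τ s) := by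
      intro s _
      rw [hA]
      simp only []
      rw [intervalIntegral.integral_const_mul]
    have hswap := fubini_helper (h := fun τ s => s * (Real.exp (-τ) * F τ s))
      (by fun_prop) ht
    rw [intervalIntegral.integral_congr h1, ← hswap]
    apply intervalIntegral.integral_congr
    intro τ _
    show (∫ s in (0:ℝ)..1, s * (Real.exp (-τ) * F τ s)) = Real.exp (-τ) * D τ
    have : ∀ s ∈ uIcc (0:ℝ) 1, s * (Real.exp (-τ) * F τ s)
        = Real.exp (-τ) * (s * F τ s) := by intro s _; ring
    rw [intervalIntegral.integral_congr this, intervalIntegral.integral_const_mul]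
  have hAx : ∀ t, Continuous fun s => A t s := fun t => by
    have : Continuous ((fun p : ℝ × ℝ => A p.1 p.2) ∘ fun s : ℝ => (t, s)) :=
      hAc.comp (by fun_prop)
    exact this
  have hFsx : ∀ t, Continuous fun s => F t s := fun t => by
    have : Continuous ((fun p : ℝ × ℝ => F p.1 p.2) ∘ fun s : ℝ => (t, s)) :=
      hFc.comp (by fun_prop)
    exact this
  have hs2 : (∫ s in (0:ℝ)..1, s * s) = 1/3 := by
    have : ∀ s ∈ uIcc (0:ℝ) 1, s * s = s ^ 2 := by intro s _; ring
    rw [intervalIntegral.integral_congr this, integral_pow]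
    norm_num
  -- the integral of s * utt t s
  have hKey : ∀ t ∈ Ici (0:ℝ), (∫ s in (0:ℝ)..1, s * utt t s) = - E t := by
    intro t ht
    have hexpand : ∀ s ∈ uIcc (0:ℝ) 1, s * utt t s
        = Real.exp t * (s * A t s) + s * F t s
          - (3 * (Real.exp t * C t + D t + E t)) * (s * s) := by
      intro s _
      rw [hutt_def]
      simp only []
      ring
    rw [intervalIntegral.integral_congr hexpand]
    have hiA : IntervalIntegrable (fun s => Real.exp t * (s * A t s)) volume 0 1 :=
      (continuous_const.mul (continuous_id.mul (hAx t))).intervalIntegrable _ _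
    have hiF : IntervalIntegrable (fun s => s * F t s) volume 0 1 :=
      (continuous_id.mul (hFsx t)).intervalIntegrable _ _
    have hiS : IntervalIntegrable
        (fun s => (3 * (Real.exp t * C t + D t + E t)) * (s * s)) volume 0 1 :=
      (by fun_prop : Continuous fun s : ℝ =>
        (3 * (Real.exp t * C t + D t + E t)) * (s * s)).intervalIntegrable _ _
    rw [intervalIntegral.integral_sub (hiA.add hiF) hiS,
      intervalIntegral.integral_add hiA hiF,
      intervalIntegral.integral_const_mul, intervalIntegral.integral_const_mul,
      hAC t ht, hs2]
    rw [hD]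
    simp only []
    ring
  refine ⟨ut, utt, ?_, ?_, hut, hutt, ?_, ?_, ?_⟩
  · have : Continuous fun p : ℝ × ℝ => ut p.1 p.2 := by
      rw [hut_def]
      exact ((Real.continuous_exp.comp continuous_fst).mul hAc).sub
        ((continuous_const.mul continuous_snd).mul
          (((Real.continuous_exp.comp continuous_fst).mul (hCc.comp continuous_fst)).add
            (hDc.comp continuous_fst)))
    exact this.continuousOn
  · have : Continuous fun p : ℝ × ℝ => utt p.1 p.2 := by
      rw [hutt_def]
      exact (((Real.continuous_exp.comp continuous_fst).mul hAc).add hFc).sub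
        ((continuous_const.mul continuous_snd).mul
          ((((Real.continuous_exp.comp continuous_fst).mul (hCc.comp continuous_fst)).add
            (hDc.comp continuous_fst)).add (hEc.comp continuous_fst)))
    exact this.continuousOn
  · -- the equation
    intro t ht x hx
    rw [hKey t ht, hutt_def, hut_def]
    simp only []
    rw [hFeq t ht x hx]
    ring
  · intro x hx
    simp [uSol2]
  · intro x hx
    have hA0 : ∀ y, A 0 y = 0 := fun y => by rw [hA]; simp
    have hC0 : C 0 = 0 := by rw [hC]; simp
    have hut0 : ∀ y, ut 0 y = -(3 * y * D 0) := fun y => by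
      rw [hut_def]; simp [hA0, hC0]
    have : (∫ s in (0:ℝ)..1, s * ut 0 s) = - D 0 := by
      have h1 : ∀ s ∈ uIcc (0:ℝ) 1, s * ut 0 s = (-(3 * D 0)) * (s * s) := by
        intro s _
        rw [hut0 s]; ring
      rw [intervalIntegral.integral_congr h1, intervalIntegral.integral_const_mul, hs2]
      ring
    rw [this, hut0 x]
    ring
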